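/- Let A be an m×n real matrix whose columns all lie in an ellipsoid E = F B₂^m with F invertible. Then the hereditary vector discrepancy of A is at most ‖E‖_∞ = max_{x∈E} ‖x‖_∞. -/

import Mathlib

open Matrix
open scoped BigOperators

/-- The Euclidean norm of a vector. -/
noncomputable def euclidNorm {ι : Type*} [Fintype ι] (v : ι → ℝ) : ℝ :=
  Real.sqrt (∑ i, (v i) ^ 2)


namespace HvecAux

variable {m n : ℕ}

lemma dot_self_nonneg {k : ℕ} (x : Fin k → ℝ) : 0 ≤ x ⬝ᵥ x :=
  Finset.sum_nonneg fun i _ => mul_self_nonneg (x i)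

lemma dot_neg_neg {k : ℕ} (z : Fin k → ℝ) : (-z) ⬝ᵥ (-z) = z ⬝ᵥ z := by
  rw [neg_dotProduct, dotProduct_neg, neg_neg]

lemma dot_add_add {k : ℕ} (p q : Fin k → ℝ) :
    (p + q) ⬝ᵥ (p + q) = p ⬝ᵥ p + 2 * (p ⬝ᵥ q) + q ⬝ᵥ q := by
  rw [add_dotProduct, dotProduct_add, dotProduct_add,
    dotProduct_comm q p]
  ring

lemma dot_sub_sub {k : ℕ} (p q : Fin k → ℝ) :
    (p - q) ⬝ᵥ (p - q) = p ⬝ᵥ p - 2 * (p ⬝ᵥ q) + q ⬝ᵥ q := by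
  rw [sub_dotProduct, dotProduct_sub, dotProduct_sub,
    dotProduct_comm q p]
  ring

lemma dot_line {k : ℕ} (p q : Fin k → ℝ) (c : ℝ) :
    (p + c • q) ⬝ᵥ (p + c • q) = p ⬝ᵥ p + 2 * c * (p ⬝ᵥ q) + c * c * (q ⬝ᵥ q) := by
  rw [dot_add_add, dotProduct_smul, smul_dotProduct, dotProduct_smul]
  simp only [smul_eq_mul]
  ring

lemma dot_comb {k : ℕ} (w p : Fin k → ℝ) (c : ℝ) :
    (c • w + p) ⬝ᵥ (c • w + p)
      = c * c * (w ⬝ᵥ w) + 2 * c * (w ⬝ᵥ p) + p ⬝ᵥ p := by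
  rw [dot_add_add, smul_dotProduct, smul_dotProduct, dotProduct_smul]
  simp only [smul_eq_mul]
  ring

lemma unit_of_normalize {k : ℕ} (z : Fin k → ℝ) (hz : 0 < z ⬝ᵥ z) :
    ((Real.sqrt (z ⬝ᵥ z))⁻¹ • z) ⬝ᵥ ((Real.sqrt (z ⬝ᵥ z))⁻¹ • z) = 1 := by
  rw [smul_dotProduct, dotProduct_smul]
  simp only [smul_eq_mul]
  have h1 : Real.sqrt (z ⬝ᵥ z) * Real.sqrt (z ⬝ᵥ z) = z ⬝ᵥ z := Real.mul_self_sqrt hz.le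
  have h2 : Real.sqrt (z ⬝ᵥ z) ≠ 0 := by positivity
  field_simp
  rw [sq, h1]

def Pm (S : Finset (Fin n)) (v : Fin n → Fin m → ℝ) (u : Fin n → Fin n → ℝ)
    (x : Fin m → ℝ) : Fin n → ℝ := fun l => ∑ j ∈ S, (v j ⬝ᵥ x) * u j l

def Gm (S : Finset (Fin n)) (v : Fin n → Fin m → ℝ) (u : Fin n → Fin n → ℝ)
    (x : Fin m → ℝ) : Fin m → ℝ := fun i => ∑ j ∈ S, (u j ⬝ᵥ Pm S v u x) * v j i

variable (S : Finset (Fin n)) (v : Fin n → Fin m → ℝ) (u : Fin n → Fin n → ℝ)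

lemma Pm_dot (x : Fin m → ℝ) (y : Fin n → ℝ) :
    Pm S v u x ⬝ᵥ y = ∑ j ∈ S, (v j ⬝ᵥ x) * (u j ⬝ᵥ y) := by
  calc Pm S v u x ⬝ᵥ y = ∑ l, (∑ j ∈ S, (v j ⬝ᵥ x) * u j l) * y l := rfl
    _ = ∑ l, ∑ j ∈ S, (v j ⬝ᵥ x) * u j l * y l := by
        apply Finset.sum_congr rfl; intro l _; rw [Finset.sum_mul]
    _ = ∑ j ∈ S, ∑ l, (v j ⬝ᵥ x) * u j l * y l := Finset.sum_comm
    _ = ∑ j ∈ S, (v j ⬝ᵥ x) * (u j ⬝ᵥ y) := by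
        apply Finset.sum_congr rfl; intro j _
        rw [show (u j ⬝ᵥ y) = ∑ l, u j l * y l from rfl, Finset.mul_sum]
        apply Finset.sum_congr rfl; intro l _; ring

lemma Gm_dot (x y : Fin m → ℝ) :
    x ⬝ᵥ Gm S v u y = Pm S v u x ⬝ᵥ Pm S v u y := by
  calc x ⬝ᵥ Gm S v u y = ∑ i, x i * ∑ j ∈ S, (u j ⬝ᵥ Pm S v u y) * v j i := rfl
    _ = ∑ i, ∑ j ∈ S, x i * ((u j ⬝ᵥ Pm S v u y) * v j i) := by
        apply Finset.sum_congr rfl; intro i _; rw [Finset.mul_sum]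
    _ = ∑ j ∈ S, ∑ i, x i * ((u j ⬝ᵥ Pm S v u y) * v j i) := Finset.sum_comm
    _ = ∑ j ∈ S, (v j ⬝ᵥ x) * (u j ⬝ᵥ Pm S v u y) := by
        apply Finset.sum_congr rfl; intro j _
        rw [show (v j ⬝ᵥ x) = ∑ i, v j i * x i from rfl, Finset.sum_mul]
        apply Finset.sum_congr rfl; intro i _; ring
    _ = Pm S v u x ⬝ᵥ Pm S v u y := (Pm_dot S v u x _).symm

lemma Pm_line (x y : Fin m → ℝ) (c : ℝ) :
    Pm S v u (x + c • y) = Pm S v u x + c • Pm S v u y := by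
  funext l
  simp only [Pm, Pi.add_apply, Pi.smul_apply, smul_eq_mul, dotProduct_add,
    dotProduct_smul, Finset.mul_sum, ← Finset.sum_add_distrib]
  apply Finset.sum_congr rfl
  intro j _
  ring

lemma Gm_line (x y : Fin m → ℝ) (c : ℝ) :
    Gm S v u (x + c • y) = Gm S v u x + c • Gm S v u y := by
  funext i
  simp only [Gm, Pm_line, Pi.add_apply, Pi.smul_apply, smul_eq_mul, dotProduct_add,
    dotProduct_smul, Finset.mul_sum, ← Finset.sum_add_distrib]
  apply Finset.sum_congr rfl
  intro j _
  ring

lemma Gm_zero : Gm S v u 0 = 0 := by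
  funext i
  have hP0 : Pm S v u 0 = 0 := by
    funext l; simp [Pm, dotProduct]
  simp [Gm, hP0, dotProduct]

end HvecAux

namespace HvecAux

variable {m n : ℕ}

lemma key (v : Fin n → Fin m → ℝ) (hv : ∀ j, v j ⬝ᵥ v j ≤ 1) :
    ∀ S : Finset (Fin n), ∃ u : Fin n → Fin n → ℝ,
      (∀ j ∈ S, u j ⬝ᵥ u j = 1) ∧
      ∀ x : Fin m → ℝ, Pm S v u x ⬝ᵥ Pm S v u x ≤ x ⬝ᵥ x := by
  intro S
  induction S using Finset.induction_on with
  | empty =>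
      refine ⟨fun _ _ => 0, by simp, ?_⟩
      intro x
      have : Pm (∅ : Finset (Fin n)) v (fun _ _ => 0) x = 0 := by
        funext l; simp [Pm]
      rw [this]
      simpa [dotProduct] using dot_self_nonneg x
  | @insert j₀ S hj₀ ih =>
      obtain ⟨u, hu1, hu2⟩ := ih
      -- the linear map x ↦ 2 x - G x is injective, hence surjective
      set T : (Fin m → ℝ) →ₗ[ℝ] (Fin m → ℝ) :=
        { toFun := fun x => (2 : ℝ) • x - Gm S v u x
          map_add' := by
            intro x y
            have h := Gm_line S v u x y 1
            rw [one_smul, one_smul] at h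
            show (2 : ℝ) • (x + y) - Gm S v u (x + y)
              = ((2 : ℝ) • x - Gm S v u x) + ((2 : ℝ) • y - Gm S v u y)
            rw [h]
            funext i
            simp only [Pi.add_apply, Pi.sub_apply, Pi.smul_apply, smul_eq_mul]
            ring
          map_smul' := by
            intro c x
            have h : Gm S v u ((0 : Fin m → ℝ) + c • x) = Gm S v u 0 + c • Gm S v u x :=
              Gm_line S v u 0 x c
            rw [zero_add, Gm_zero, zero_add] at h
            show (2 : ℝ) • (c • x) - Gm S v u (c • x)
              = (RingHom.id ℝ) c • ((2 : ℝ) • x - Gm S v u x)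
            rw [h]
            funext i
            simp only [Pi.sub_apply, Pi.smul_apply, smul_eq_mul, RingHom.id_apply]
            ring } with hT
      have hTinj : Function.Injective T := by
        rw [injective_iff_map_eq_zero]
        intro x hx
        have hx' : (2 : ℝ) • x - Gm S v u x = 0 := hx
        have h1 : x ⬝ᵥ ((2 : ℝ) • x - Gm S v u x) = 0 := by rw [hx']; simp [dotProduct]
        have h2 : x ⬝ᵥ ((2 : ℝ) • x - Gm S v u x) = 2 * (x ⬝ᵥ x) - Pm S v u x ⬝ᵥ Pm S v u x := by
          rw [dotProduct_sub, dotProduct_smul, Gm_dot]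
          simp
        have h3 := hu2 x
        have h4 : x ⬝ᵥ x = 0 := le_antisymm (by rw [h2] at h1; linarith) (dot_self_nonneg x)
        exact dotProduct_self_eq_zero.mp h4
      obtain ⟨h, hh⟩ := (LinearMap.injective_iff_surjective.mp hTinj) (-(v j₀))
      have hh' : (2 : ℝ) • h - Gm S v u h = -(v j₀) := hh
      -- scalar data
      set gh : Fin m → ℝ := Gm S v u h with hgh
      set ch : Fin m → ℝ := h - gh with hch
      set δ : ℝ := h ⬝ᵥ h with hδ
      set γ : ℝ := Pm S v u h ⬝ᵥ Pm S v u h with hγ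
      set c1 : ℝ := h ⬝ᵥ ch with hc1
      set ε : ℝ := ch ⬝ᵥ ch with hε
      clear_value gh ch δ γ c1 ε
      have hvj₀ : v j₀ = -(h + ch) := by
        rw [hch]
        funext i
        have h0 := congrFun hh' i
        simp only [Pi.sub_apply, Pi.smul_apply, smul_eq_mul, Pi.neg_apply] at h0
        simp only [Pi.neg_apply, Pi.add_apply, Pi.sub_apply]
        linarith
      have hchh : ch ⬝ᵥ h = c1 := by rw [dotProduct_comm, hc1]
      have hc1' : c1 = δ - γ := by
        rw [hc1, hδ, hγ, hch, dotProduct_sub, hgh, Gm_dot]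
      have hγδ : γ ≤ δ := by rw [hγ, hδ]; exact hu2 h
      have hc1nn : 0 ≤ c1 := by rw [hc1']; linarith
      have hεnn : 0 ≤ ε := by rw [hε]; exact dot_self_nonneg ch
      have hvv : v j₀ ⬝ᵥ v j₀ = δ + 2 * c1 + ε := by
        rw [hvj₀, dot_neg_neg, dot_add_add, ← hδ, ← hc1, ← hε]
      have hvv1 : δ + 2 * c1 + ε ≤ 1 := by rw [← hvv]; exact hv j₀
      have hsq : 0 ≤ δ - 2 * c1 + ε := by
        have heq : (h - ch) ⬝ᵥ (h - ch) = δ - 2 * c1 + ε := by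
          rw [dot_sub_sub, ← hδ, ← hc1, ← hε]
        rw [← heq]
        exact dot_self_nonneg _
      have h4c1 : 4 * c1 ≤ 1 := by linarith
      have hγ1 : γ ≤ 1 := by
        have : γ = δ - c1 := by rw [hc1']; ring
        linarith
      have hγnn : 0 ≤ γ := by rw [hγ]; exact dot_self_nonneg _
      -- a unit vector orthogonal to all u j, j ∈ S
      have hcard : S.card < n := by
        have h1 : S.card < (insert j₀ S).card := Finset.card_lt_card (Finset.ssubset_insert hj₀)
        have h2 : (insert j₀ S).card ≤ Fintype.card (Fin n) := Finset.card_le_univ _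
        simpa using lt_of_lt_of_le h1 h2
      obtain ⟨e, he1, he2⟩ : ∃ e : Fin n → ℝ, e ⬝ᵥ e = 1 ∧ ∀ j ∈ S, u j ⬝ᵥ e = 0 := by
        set L : (Fin n → ℝ) →ₗ[ℝ] ({ j // j ∈ S } → ℝ) :=
          { toFun := fun x => fun j => u j ⬝ᵥ x
            map_add' := by intro x y; funext j; simp [dotProduct_add]
            map_smul' := by intro c x; funext j; simp [dotProduct_smul] } with hL
        have hnotinj : ¬ Function.Injective L := by
          intro hinj
          have hle := LinearMap.finrank_le_finrank_of_injective hinj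
          rw [Module.finrank_pi ℝ, Module.finrank_pi ℝ] at hle
          simp only [Fintype.card_coe, Fintype.card_fin] at hle
          omega
        rw [Function.Injective] at hnotinj
        push_neg at hnotinj
        obtain ⟨a, b, hab, hne⟩ := hnotinj
        have he₀ne : a - b ≠ 0 := sub_ne_zero_of_ne hne
        have he₀orth : ∀ j ∈ S, u j ⬝ᵥ (a - b) = 0 := by
          intro j hj
          have h0 : L a ⟨j, hj⟩ = L b ⟨j, hj⟩ := by rw [hab]
          simp only [hL, LinearMap.coe_mk, AddHom.coe_mk] at h0
          rw [dotProduct_sub]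
          linarith
        have he₀pos : 0 < (a - b) ⬝ᵥ (a - b) := by
          rcases lt_or_eq_of_le (dot_self_nonneg (a - b)) with h0 | h0
          · exact h0
          · exact absurd (dotProduct_self_eq_zero.mp h0.symm) he₀ne
        refine ⟨(Real.sqrt ((a - b) ⬝ᵥ (a - b)))⁻¹ • (a - b), unit_of_normalize _ he₀pos, ?_⟩
        · intro j hj
          rw [dotProduct_smul, he₀orth j hj]
          simp
      set β : ℝ := Real.sqrt (1 - γ) with hβ
      have hβsq : β * β = 1 - γ := by rw [hβ]; exact Real.mul_self_sqrt (by linarith)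
      set w₀ : Fin n → ℝ := Pm S v u h + β • e with hw₀
      clear_value β w₀
      have hPe : ∀ y : Fin m → ℝ, Pm S v u y ⬝ᵥ e = 0 := by
        intro y
        rw [Pm_dot]
        apply Finset.sum_eq_zero
        intro j hj
        rw [he2 j hj, mul_zero]
      have hw₀w₀ : w₀ ⬝ᵥ w₀ = 1 := by
        rw [hw₀, dot_line, hPe h, he1, ← hγ]
        linear_combination hβsq
      refine ⟨Function.update u j₀ w₀, ?_, ?_⟩
      · intro j hj
        rcases Finset.mem_insert.mp hj with h0 | h0
        · subst h0
          rw [Function.update_self]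
          exact hw₀w₀
        · have hne : j ≠ j₀ := by rintro rfl; exact hj₀ h0
          rw [Function.update_of_ne hne]
          exact hu1 j h0
      · intro x
        have hvec : Pm (insert j₀ S) v (Function.update u j₀ w₀) x
            = (v j₀ ⬝ᵥ x) • w₀ + Pm S v u x := by
          funext l
          show ∑ j ∈ insert j₀ S, (v j ⬝ᵥ x) * Function.update u j₀ w₀ j l = _
          rw [Finset.sum_insert hj₀, Function.update_self]
          show _ = (v j₀ ⬝ᵥ x) * w₀ l + Pm S v u x l
          congr 1
          apply Finset.sum_congr rfl
          intro j hj
          have hne : j ≠ j₀ := by rintro rfl; exact hj₀ hj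
          rw [Function.update_of_ne hne]
        rw [hvec]
        set a : ℝ := Pm S v u x ⬝ᵥ Pm S v u x with ha
        set g : ℝ := Pm S v u x ⬝ᵥ Pm S v u h with hg
        set t : ℝ := h ⬝ᵥ x with ht
        clear_value a g t
        have hs1 : v j₀ ⬝ᵥ x = g - 2 * t := by
          rw [hvj₀, neg_dotProduct, add_dotProduct]
          have h2 : ch ⬝ᵥ x = t - g := by
            rw [hch, sub_dotProduct]
            have h3 : gh ⬝ᵥ x = g := by
              rw [dotProduct_comm, hgh, Gm_dot, hg]
            rw [h3, ht]
          rw [h2, ht]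
          ring
        have hdot : ((v j₀ ⬝ᵥ x) • w₀ + Pm S v u x) ⬝ᵥ ((v j₀ ⬝ᵥ x) • w₀ + Pm S v u x)
            = (v j₀ ⬝ᵥ x) * (v j₀ ⬝ᵥ x) * (w₀ ⬝ᵥ w₀)
              + 2 * (v j₀ ⬝ᵥ x) * (w₀ ⬝ᵥ Pm S v u x) + a := by
          rw [dot_comb, ← ha]
        rw [hdot, hw₀w₀]
        have hw₀Px : w₀ ⬝ᵥ Pm S v u x = g := by
          rw [hw₀, add_dotProduct, smul_dotProduct]
          have h1 : Pm S v u h ⬝ᵥ Pm S v u x = g := by rw [dotProduct_comm, ← hg]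
          have h2 : e ⬝ᵥ Pm S v u x = 0 := by rw [dotProduct_comm]; exact hPe x
          rw [h1, h2]
          simp
        rw [hw₀Px, hs1]
        -- Cauchy-Schwarz for the PSD form y ↦ y ⬝ᵥ y - Pm y ⬝ᵥ Pm y
        have hCS : (t - g) * (t - g) ≤ c1 * (x ⬝ᵥ x - a) := by
          have hquad : ∀ lam : ℝ,
              0 ≤ c1 * (lam * lam) + (2 * (t - g)) * lam + (x ⬝ᵥ x - a) := by
            intro lam
            have h1 := hu2 (x + lam • h)
            rw [Pm_line] at h1
            have h2 : (x + lam • h) ⬝ᵥ (x + lam • h)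
                = x ⬝ᵥ x + 2 * lam * t + lam * lam * δ := by
              rw [dot_line, ← hδ]
              have h3 : x ⬝ᵥ h = t := by rw [dotProduct_comm, ht]
              rw [h3]
            have h3 : (Pm S v u x + lam • Pm S v u h) ⬝ᵥ (Pm S v u x + lam • Pm S v u h)
                = a + 2 * lam * g + lam * lam * γ := by
              rw [dot_line, ← hg, ← ha, ← hγ]
            rw [h2, h3] at h1
            have hc : c1 * (lam * lam) = δ * (lam * lam) - γ * (lam * lam) := by
              rw [hc1']; ring
            linarith [h1, hc]
          have hd := discrim_le_zero hquad
          rw [discrim] at hd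
          nlinarith only [hd]
        have hxa : 0 ≤ x ⬝ᵥ x - a := by have := hu2 x; rw [← ha] at this; linarith
        have hkey : 4 * ((t - g) * (t - g)) ≤ x ⬝ᵥ x - a := by
          have h1 : 4 * (c1 * (x ⬝ᵥ x - a)) ≤ 1 * (x ⬝ᵥ x - a) := by
            rw [← mul_assoc]
            exact mul_le_mul_of_nonneg_right h4c1 hxa
          linarith
        have expand : (g - 2 * t) * (g - 2 * t) * 1 + 2 * (g - 2 * t) * g + a
            = a + 4 * ((t - g) * (t - g)) - g * g := by ring
        rw [expand]
        linarith only [hkey, mul_self_nonneg g]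

end HvecAux


lemma HvecAux.enorm_eq_sqrt_dot {k : ℕ} (x : Fin k → ℝ) :
    euclidNorm x = Real.sqrt (x ⬝ᵥ x) := by
  unfold euclidNorm
  congr 1
  apply Finset.sum_congr rfl
  intro i _
  ring

/-- If all columns of `A` lie in an ellipsoid `E = F B₂^m` with `F` invertible, then the
hereditary vector discrepancy of `A` is at most `‖E‖_∞ = max_{x ∈ E} ‖x‖_∞`: for every subset
`S` of columns there is an assignment of unit vectors to the columns in `S` whose row
imbalances are all at most `‖E‖_∞`. -/
theorem hvecdisc_le_ellipsoid_width {m n : ℕ} (A : Matrix (Fin m) (Fin n) ℝ)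
    (F : Matrix (Fin m) (Fin m) ℝ) (hF : IsUnit F.det)
    (hcols : ∀ j, ∃ u : Fin m → ℝ, euclidNorm u ≤ 1 ∧ (fun i => A i j) = F.mulVec u) :
    ∀ S : Finset (Fin n), ∃ u : Fin n → Fin n → ℝ,
      (∀ j ∈ S, euclidNorm (u j) = 1) ∧
      ∀ i : Fin m, euclidNorm (fun l => ∑ j ∈ S, A i j * u j l) ≤
        sSup {r : ℝ | ∃ w : Fin m → ℝ, euclidNorm w ≤ 1 ∧ r = ⨆ i' : Fin m, |F.mulVec w i'|} := by
  intro S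
  classical
  choose v hv1 hv2 using hcols
  have hvdot : ∀ j, v j ⬝ᵥ v j ≤ 1 := by
    intro j
    have h1 : Real.sqrt (v j ⬝ᵥ v j) ≤ 1 := by
      rw [← HvecAux.enorm_eq_sqrt_dot]; exact hv1 j
    have h2 : 0 ≤ v j ⬝ᵥ v j := HvecAux.dot_self_nonneg (v j)
    nlinarith [Real.mul_self_sqrt h2, Real.sqrt_nonneg (v j ⬝ᵥ v j)]
  obtain ⟨u, hu1, hu2⟩ := HvecAux.key v hvdot S
  refine ⟨u, ?_, ?_⟩
  · intro j hj
    rw [HvecAux.enorm_eq_sqrt_dot, hu1 j hj, Real.sqrt_one]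
  · intro i
    set Sset : Set ℝ :=
      {r : ℝ | ∃ w : Fin m → ℝ, euclidNorm w ≤ 1 ∧ r = ⨆ i' : Fin m, |F.mulVec w i'|} with hSset
    set f : Fin m → ℝ := fun k => F i k with hf
    have hAij : ∀ j, A i j = v j ⬝ᵥ f := by
      intro j
      have h0 := congrFun (hv2 j) i
      change A i j = F.mulVec (v j) i at h0
      rw [h0]
      show ∑ k, F i k * v j k = ∑ k, v j k * f k
      apply Finset.sum_congr rfl
      intro k _
      rw [hf]
      ring
    have hbound : (fun l => ∑ j ∈ S, A i j * u j l) ⬝ᵥ (fun l => ∑ j ∈ S, A i j * u j l)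
        ≤ f ⬝ᵥ f := by
      have heq : (fun l => ∑ j ∈ S, A i j * u j l) = HvecAux.Pm S v u f := by
        funext l
        apply Finset.sum_congr rfl
        intro j _
        rw [hAij j]
      rw [heq]
      exact hu2 f
    have hzero_mem : (0 : ℝ) ∈ Sset := by
      refine ⟨0, ?_, ?_⟩
      · rw [HvecAux.enorm_eq_sqrt_dot]
        simp [dotProduct]
      · have hz : ∀ i' : Fin m, |F.mulVec (0 : Fin m → ℝ) i'| = 0 := by
          intro i'
          simp [Matrix.mulVec, dotProduct]
        rcases Nat.eq_zero_or_pos m with hm | hm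
        · subst hm
          rw [Real.iSup_of_isEmpty]
        · symm
          apply le_antisymm
          · exact Real.iSup_le (fun i' => le_of_eq (hz i')) le_rfl
          · have i0 : Fin m := ⟨0, hm⟩
            rw [← hz i0]
            exact le_ciSup (f := fun i' => |F.mulVec (0 : Fin m → ℝ) i'|)
              (Set.Finite.bddAbove (Set.finite_range _)) i0
    have hbdd : BddAbove Sset := by
      refine ⟨∑ i' : Fin m, Real.sqrt ((fun k => F i' k) ⬝ᵥ (fun k => F i' k)), ?_⟩
      rintro r ⟨w, hw, rfl⟩
      have hwdot : w ⬝ᵥ w ≤ 1 := by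
        rw [HvecAux.enorm_eq_sqrt_dot] at hw
        nlinarith [Real.mul_self_sqrt (HvecAux.dot_self_nonneg w), Real.sqrt_nonneg (w ⬝ᵥ w)]
      apply Real.iSup_le
      · intro i'
        have h1 : (F.mulVec w i') * (F.mulVec w i')
            ≤ ((fun k => F i' k) ⬝ᵥ (fun k => F i' k)) * (w ⬝ᵥ w) := by
          have hcs := Finset.sum_mul_sq_le_sq_mul_sq Finset.univ (fun k => F i' k) w
          have e1 : F.mulVec w i' = ∑ k, F i' k * w k := rfl
          have e2 : (fun k => F i' k) ⬝ᵥ (fun k => F i' k) = ∑ k, F i' k ^ 2 := by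
            apply Finset.sum_congr rfl; intros; ring
          have e3 : w ⬝ᵥ w = ∑ k, w k ^ 2 := by
            apply Finset.sum_congr rfl; intros; ring
          rw [e1, e2, e3]
          nlinarith [hcs]
        have h2 : |F.mulVec w i'| ≤ Real.sqrt ((fun k => F i' k) ⬝ᵥ (fun k => F i' k)) := by
          rw [← Real.sqrt_mul_self_eq_abs]
          apply Real.sqrt_le_sqrt
          calc F.mulVec w i' * F.mulVec w i'
              ≤ ((fun k => F i' k) ⬝ᵥ (fun k => F i' k)) * (w ⬝ᵥ w) := h1
            _ ≤ ((fun k => F i' k) ⬝ᵥ (fun k => F i' k)) * 1 := by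
                apply mul_le_mul_of_nonneg_left hwdot (HvecAux.dot_self_nonneg _)
            _ = (fun k => F i' k) ⬝ᵥ (fun k => F i' k) := by ring
        calc |F.mulVec w i'| ≤ Real.sqrt ((fun k => F i' k) ⬝ᵥ (fun k => F i' k)) := h2
          _ ≤ ∑ i'' : Fin m, Real.sqrt ((fun k => F i'' k) ⬝ᵥ (fun k => F i'' k)) :=
              Finset.single_le_sum
                (f := fun i'' => Real.sqrt ((fun k => F i'' k) ⬝ᵥ (fun k => F i'' k)))
                (fun i'' _ => Real.sqrt_nonneg _) (Finset.mem_univ i')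
      · exact Finset.sum_nonneg fun i'' _ => Real.sqrt_nonneg _
    have hfle : Real.sqrt (f ⬝ᵥ f) ≤ sSup Sset := by
      by_cases hf0 : f ⬝ᵥ f = 0
      · rw [hf0, Real.sqrt_zero]
        exact le_csSup hbdd hzero_mem
      · have hfpos : 0 < f ⬝ᵥ f :=
          lt_of_le_of_ne (HvecAux.dot_self_nonneg f) (Ne.symm hf0)
        have hsqpos : 0 < Real.sqrt (f ⬝ᵥ f) := Real.sqrt_pos.mpr hfpos
        set w : Fin m → ℝ := (Real.sqrt (f ⬝ᵥ f))⁻¹ • f with hw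
        have hwnorm : euclidNorm w ≤ 1 := by
          rw [HvecAux.enorm_eq_sqrt_dot, hw, HvecAux.unit_of_normalize f hfpos, Real.sqrt_one]
        have hmem : (⨆ i' : Fin m, |F.mulVec w i'|) ∈ Sset := ⟨w, hwnorm, rfl⟩
        have hival : F.mulVec w i = Real.sqrt (f ⬝ᵥ f) := by
          have e1 : F.mulVec w i = ∑ k, F i k * ((Real.sqrt (f ⬝ᵥ f))⁻¹ * f k) := rfl
          have e2 : ∑ k, F i k * ((Real.sqrt (f ⬝ᵥ f))⁻¹ * f k)
              = (Real.sqrt (f ⬝ᵥ f))⁻¹ * (f ⬝ᵥ f) := by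
            show _ = (Real.sqrt (f ⬝ᵥ f))⁻¹ * ∑ k, f k * f k
            rw [Finset.mul_sum]
            apply Finset.sum_congr rfl
            intro k _
            show F i k * ((Real.sqrt (f ⬝ᵥ f))⁻¹ * f k) = (Real.sqrt (f ⬝ᵥ f))⁻¹ * (f k * f k)
            rw [hf]
            ring
          rw [e1, e2, ← Real.mul_self_sqrt hfpos.le]
          field_simp
          rw [Real.sqrt_sq hsqpos.le]
        have h1 : Real.sqrt (f ⬝ᵥ f) ≤ ⨆ i' : Fin m, |F.mulVec w i'| := by
          have h2 : |F.mulVec w i| ≤ ⨆ i' : Fin m, |F.mulVec w i'| :=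
            le_ciSup (f := fun i' => |F.mulVec w i'|)
              (Set.Finite.bddAbove (Set.finite_range _)) i
          rw [hival, abs_of_nonneg hsqpos.le] at h2
          exact h2
        exact le_trans h1 (le_csSup hbdd hmem)
    rw [HvecAux.enorm_eq_sqrt_dot]
    calc Real.sqrt ((fun l => ∑ j ∈ S, A i j * u j l) ⬝ᵥ (fun l => ∑ j ∈ S, A i j * u j l))
        ≤ Real.sqrt (f ⬝ᵥ f) := Real.sqrt_le_sqrt hbound
      _ ≤ sSup Sset := hfle
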